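/- arXiv:1903.03873 — 2 statements merged into one kernel-verified Lean document; each statement's English description precedes it below -/
import Mathlib

section
/- (Bounds on q₃ for high temperatures; Proposition prop:bounds-highA.) Suppose −B²/(3C) ≤ A < 0 and let (q₁, q₂, q₃) be a solution of (EL123)–(BC123) with q₃ < 0 everywhere in Ω. Then −s₊/6 ≤ q₃(x,y) ≤ s₋/3 for every (x,y) ∈ Ω. -/
open MeasureTheory Set

noncomputable section

/-- `s₊ = (B + √(B² + 24|A|C))/(4C)`. -/
def splus (A B C : ℝ) : ℝ := (B + Real.sqrt (B ^ 2 + 24 * |A| * C)) / (4 * C)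

/-- `s₋ = (B − √(B² + 24|A|C))/(4C)`. -/
def sminus (A B C : ℝ) : ℝ := (B - Real.sqrt (B ^ 2 + 24 * |A| * C)) / (4 * C)

/-- The truncated square `Ω`. -/
def TSq (η : ℝ) : Set (ℝ × ℝ) :=
  {p | |p.1| < 1 - η ∧ |p.2| < 1 - η ∧ |p.1 + p.2| < 1 ∧ |p.1 - p.2| < 1}

/-- Long edge `C₁` on the line `x + y = 1`. -/
def edgeC1 (η : ℝ) : Set (ℝ × ℝ) := {p | p.1 + p.2 = 1 ∧ η ≤ p.1 ∧ p.1 ≤ 1 - η}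
/-- Long edge `C₂` on the line `y − x = 1`. -/
def edgeC2 (η : ℝ) : Set (ℝ × ℝ) := {p | p.2 - p.1 = 1 ∧ -(1 - η) ≤ p.1 ∧ p.1 ≤ -η}
/-- Long edge `C₃` on the line `x + y = −1`. -/
def edgeC3 (η : ℝ) : Set (ℝ × ℝ) := {p | p.1 + p.2 = -1 ∧ -(1 - η) ≤ p.1 ∧ p.1 ≤ -η}
/-- Long edge `C₄` on the line `x − y = 1`. -/
def edgeC4 (η : ℝ) : Set (ℝ × ℝ) := {p | p.1 - p.2 = 1 ∧ η ≤ p.1 ∧ p.1 ≤ 1 - η}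
/-- Short edge `S₁`, `x = 1 − η`. -/
def edgeS1 (η : ℝ) : Set (ℝ × ℝ) := {p | p.1 = 1 - η ∧ |p.2| ≤ η}
/-- Short edge `S₂`, `y = 1 − η`. -/
def edgeS2 (η : ℝ) : Set (ℝ × ℝ) := {p | p.2 = 1 - η ∧ |p.1| ≤ η}
/-- Short edge `S₃`, `x = −(1 − η)`. -/
def edgeS3 (η : ℝ) : Set (ℝ × ℝ) := {p | p.1 = -(1 - η) ∧ |p.2| ≤ η}
/-- Short edge `S₄`, `y = −(1 − η)`. -/
def edgeS4 (η : ℝ) : Set (ℝ × ℝ) := {p | p.2 = -(1 - η) ∧ |p.1| ≤ η}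

/-- The interpolating boundary function `g₀(s) = s₊ s/(2η)`. -/
def g0 (A B C η s : ℝ) : ℝ := splus A B C * s / (2 * η)

/-- The two-dimensional Laplacian: sum of the two second partial derivatives. -/
def lap2 (q : ℝ × ℝ → ℝ) (p : ℝ × ℝ) : ℝ :=
  deriv (deriv fun x => q (x, p.2)) p.1 + deriv (deriv fun y => q (p.1, y)) p.2

/-- `|∇q|²` in two dimensions. -/
def gradSq2 (q : ℝ × ℝ → ℝ) (p : ℝ × ℝ) : ℝ :=
  (deriv (fun x => q (x, p.2)) p.1) ^ 2 + (deriv (fun y => q (p.1, y)) p.2) ^ 2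

/-- The Dirichlet boundary condition `q₁ = q₁b` on `∂Ω`. -/
def BC1 (A B C η : ℝ) (q1 : ℝ × ℝ → ℝ) : Prop :=
  (∀ p ∈ edgeC1 η ∪ edgeC3 η, q1 p = -(splus A B C) / 2) ∧
  (∀ p ∈ edgeC2 η ∪ edgeC4 η, q1 p = splus A B C / 2) ∧
  (∀ p ∈ edgeS1 η ∪ edgeS3 η, q1 p = g0 A B C η p.2) ∧
  (∀ p ∈ edgeS2 η ∪ edgeS4 η, q1 p = g0 A B C η p.1)

/-- A solution of the system (EL123) with boundary conditions (BC123):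
a triple of functions in `C²(Ω) ∩ C(Ω̄)` satisfying the three PDEs in `Ω`,
with `q₁ = q₁b`, `q₂ = 0`, `q₃ = −s₊/6` on `∂Ω`. -/
def IsSolEL123 (A B C L lam η : ℝ) (q1 q2 q3 : ℝ × ℝ → ℝ) : Prop :=
  ContDiffOn ℝ 2 q1 (TSq η) ∧ ContDiffOn ℝ 2 q2 (TSq η) ∧ ContDiffOn ℝ 2 q3 (TSq η) ∧
  ContinuousOn q1 (closure (TSq η)) ∧ ContinuousOn q2 (closure (TSq η)) ∧
  ContinuousOn q3 (closure (TSq η)) ∧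
  (∀ p ∈ TSq η, lap2 q1 p =
    lam ^ 2 / L * q1 p *
      (A + 2 * B * q3 p + 2 * C * ((q1 p) ^ 2 + (q2 p) ^ 2 + 3 * (q3 p) ^ 2))) ∧
  (∀ p ∈ TSq η, lap2 q2 p =
    lam ^ 2 / L * q2 p *
      (A + 2 * B * q3 p + 2 * C * ((q1 p) ^ 2 + (q2 p) ^ 2 + 3 * (q3 p) ^ 2))) ∧
  (∀ p ∈ TSq η, lap2 q3 p =
    lam ^ 2 / L * q3 p *
      (A - B * q3 p + 2 * C * ((q1 p) ^ 2 + (q2 p) ^ 2 + 3 * (q3 p) ^ 2))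
      + lam ^ 2 * B / (3 * L) * ((q1 p) ^ 2 + (q2 p) ^ 2)) ∧
  BC1 A B C η q1 ∧
  (∀ p ∈ frontier (TSq η), q2 p = 0) ∧
  (∀ p ∈ frontier (TSq η), q3 p = -(splus A B C) / 6)

/-! ### Auxiliary lemmas -/

section Aux

-- ALGEBRA (tested)

lemma alg_sigma {B C s A t r : ℝ} (hB : 0 < B) (hC : 0 < C) (hs : 0 < s)
    (h4Cs : B < 4 * C * s) (hA : 3 * A = B * s - 2 * C * s ^ 2) (ht : t ≤ 0) (hr : 0 ≤ r)
    (hK : (r + 3 * t ^ 2) * (A + 2 * C * (r + 3 * t ^ 2)) + 3 * B * t * (r - t ^ 2) ≤ 0) :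
    r + 3 * t ^ 2 ≤ s ^ 2 / 3 := by
  by_contra hcon
  push_neg at hcon
  set m := r + 3 * t ^ 2 with hm; clear_value m
  set u := -t with hu; clear_value u
  set e := m - s ^ 2 / 3 with he; clear_value e
  have hepos : 0 < e := by rw [he]; linarith
  have hupos : 0 ≤ u := by rw [hu]; linarith
  have hmpos : 0 < m := by nlinarith [sq_nonneg s]
  have hA' : A = B * s / 3 - 2 * C * s ^ 2 / 3 := by linarith
  have ht' : t = -u := by rw [hu]; ring
  have hrm : r = m - 3 * u ^ 2 := by rw [hm, ht']; ring
  have hL : m * (B * s / 3 + 2 * C * e) ≤ 3 * B * u * (m - 4 * u ^ 2) := by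
    have h1 : m * (A + 2 * C * m) = m * (B * s / 3 + 2 * C * e) := by
      rw [hA', he]; ring
    have h2 : 3 * B * t * (r - t ^ 2) = -(3 * B * u * (m - 4 * u ^ 2)) := by
      rw [ht', hrm]; ring
    linarith [hK, h1.symm.le]
  have hBse : 0 < B * s / 3 + 2 * C * e := by
    have h1 : 0 < B * s := mul_pos hB hs
    have h2 : 0 < C * e := mul_pos hC hepos
    linarith
  have hRpos : 0 < 3 * B * u * (m - 4 * u ^ 2) := lt_of_lt_of_le (mul_pos hmpos hBse) hL
  have hrm' : (0:ℝ) ≤ m - 3 * u ^ 2 := by linarith [hrm, hr]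
  have h27 : 27 * u ^ 2 * (m - 4 * u ^ 2) ^ 2 ≤ m ^ 3 := by
    nlinarith [mul_nonneg (sq_nonneg (u ^ 2 - m / 12)) hrm']
  have hsq : (m * (B * s / 3 + 2 * C * e)) ^ 2 ≤ (3 * B * u * (m - 4 * u ^ 2)) ^ 2 :=
    pow_le_pow_left₀ (le_of_lt (mul_pos hmpos hBse)) hL 2
  have hsq2 : (3 * B * u * (m - 4 * u ^ 2)) ^ 2 ≤ B ^ 2 * m ^ 3 / 3 := by
    nlinarith [mul_le_mul_of_nonneg_left h27 (sq_nonneg B)]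
  have hdiv : (B * s / 3 + 2 * C * e) ^ 2 ≤ B ^ 2 * m / 3 := by
    by_contra hX
    push_neg at hX
    have h5 := mul_lt_mul_of_pos_left hX (mul_pos hmpos hmpos)
    linarith [le_trans hsq hsq2, h5]
  have hme : m = s ^ 2 / 3 + e := by linarith
  rw [hme] at hdiv
  linarith [hdiv, mul_pos (mul_pos hC hC) (mul_pos hepos hepos),
    mul_lt_mul_of_pos_right h4Cs (mul_pos hB hepos)]

lemma root_factor {B C s sm A t : ℝ} (hsum : 2 * C * (s + sm) = B) (hps : 2 * C * s * sm = 3 * A) :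
    A - B * t + 6 * C * t ^ 2 = 6 * C * (t - sm / 3) * (t - s / 3) := by
  linear_combination t * hsum - (1/3) * hps

lemma alg_upper {B C s sm A t r : ℝ} (hB : 0 < B) (hC : 0 < C) (hs : 0 < s)
    (hsum : 2 * C * (s + sm) = B) (hps : 2 * C * s * sm = 3 * A)
    (hDle : 0 ≤ 2 * C * sm + B)
    (ht : t < 0) (hr : 0 ≤ r)
    (hK : t * (A - B * t + 6 * C * t ^ 2) + r * (2 * C * t + B / 3) ≤ 0) :
    t ≤ sm / 3 := by
  by_contra hgt
  push_neg at hgt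
  have hX : A - B * t + 6 * C * t ^ 2 = 6 * C * (t - sm / 3) * (t - s / 3) :=
    root_factor hsum hps
  have hXneg : A - B * t + 6 * C * t ^ 2 < 0 := by
    rw [hX]
    apply mul_neg_of_pos_of_neg
    · exact mul_pos (by linarith) (by linarith)
    · linarith
  have htX : 0 < t * (A - B * t + 6 * C * t ^ 2) := mul_pos_of_neg_of_neg ht hXneg
  have hcoef : 0 ≤ 2 * C * t + B / 3 := by
    have := mul_lt_mul_of_pos_left hgt (by linarith : (0:ℝ) < 2 * C)
    linarith
  have hrterm : 0 ≤ r * (2 * C * t + B / 3) := mul_nonneg hr hcoef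
  linarith

lemma alg_lower {B C s sm A t r : ℝ} (hB : 0 < B) (hC : 0 < C) (hs : 0 < s)
    (hsum : 2 * C * (s + sm) = B) (hps : 2 * C * s * sm = 3 * A)
    (hA : 3 * A = B * s - 2 * C * s ^ 2) (hsmB : C * s ≤ B)
    (ht : t < 0) (hr : 0 ≤ r) (hsig : r + 3 * t ^ 2 ≤ s ^ 2 / 3)
    (hK : 0 ≤ t * (A - B * t + 6 * C * t ^ 2) + r * (2 * C * t + B / 3)) :
    -s / 6 ≤ t := by
  by_contra hlt
  push_neg at hlt
  rcases lt_or_ge 0 (2 * C * t + B / 3) with hc | hc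
  · have hterm : r * (2 * C * t + B / 3) ≤ (s ^ 2 / 3 - 3 * t ^ 2) * (2 * C * t + B / 3) :=
      mul_le_mul_of_nonneg_right (by linarith) (le_of_lt hc)
    have hH : t * (A - B * t + 6 * C * t ^ 2) + (s ^ 2 / 3 - 3 * t ^ 2) * (2 * C * t + B / 3)
        = -2 * B * ((s / 3 - t) * (-(t + s / 6))) := by
      linear_combination (t / 3) * hA
    have hprod : 0 < (s / 3 - t) * (-(t + s / 6)) :=
      mul_pos (by linarith) (by linarith)
    have hBprod : 0 < B * ((s / 3 - t) * (-(t + s / 6))) := mul_pos hB hprod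
    linarith
  · have hrterm : r * (2 * C * t + B / 3) ≤ 0 := mul_nonpos_of_nonneg_of_nonpos hr hc
    have htX : 0 ≤ t * (A - B * t + 6 * C * t ^ 2) := by linarith
    have hXle : A - B * t + 6 * C * t ^ 2 ≤ 0 := by
      by_contra hX
      push_neg at hX
      have := mul_neg_of_neg_of_pos ht hX
      linarith
    have hX : A - B * t + 6 * C * t ^ 2 = 6 * C * (t - sm / 3) * (t - s / 3) :=
      root_factor hsum hps
    have hsm : sm / 3 ≤ t := by
      by_contra hsm'
      push_neg at hsm'
      have h1 : 0 < 6 * C * (sm / 3 - t) := mul_pos (by linarith) (by linarith)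
      have h2 : 0 < (6 * C * (sm / 3 - t)) * (s / 3 - t) := mul_pos h1 (by linarith)
      nlinarith [hXle, hX]
    have hsmge : -(s / 2) ≤ sm := by
      by_contra hs2
      push_neg at hs2
      have := mul_neg_of_pos_of_neg (by linarith : (0:ℝ) < 2 * C) (by linarith : sm + s / 2 < 0)
      nlinarith
    linarith

-- CALCULUS (tested)

lemma deriv2_nonpos_localmax {f : ℝ → ℝ} {s : Set ℝ} (hs : IsOpen s) {a : ℝ}
    (ha : a ∈ s) (hf : ContDiffOn ℝ 2 f s) (hmax : IsLocalMax f a) :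
    deriv (deriv f) a ≤ 0 := by
  by_contra hcon
  push_neg at hcon
  have hf1 : ContDiffOn ℝ 1 (deriv f) s := hf.deriv_of_isOpen hs (m := 1) (by norm_num)
  have hd2cont : ContinuousOn (deriv (deriv f)) s :=
    hf1.continuousOn_deriv_of_isOpen hs (by norm_num)
  have hc : ContinuousAt (deriv (deriv f)) a :=
    hd2cont.continuousAt (hs.mem_nhds ha)
  have hposnhds : {x | 0 < deriv (deriv f) x} ∈ nhds a :=
    hc.preimage_mem_nhds (Ioi_mem_nhds hcon)
  have hmem : s ∩ ({x | 0 < deriv (deriv f) x} ∩ {x | f x ≤ f a}) ∈ nhds a :=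
    Filter.inter_mem (hs.mem_nhds ha) (Filter.inter_mem hposnhds hmax)
  obtain ⟨l, u, halu, hsub⟩ := mem_nhds_iff_exists_Ioo_subset.1 hmem
  obtain ⟨hla, hau⟩ := halu
  set c := (a + u) / 2 with hc_def
  have hac : a < c := by simp only [hc_def]; linarith
  have hcu : c < u := by simp only [hc_def]; linarith
  have hIccIoo : Icc a c ⊆ Ioo l u := fun x hx => ⟨lt_of_lt_of_le hla hx.1, lt_of_le_of_lt hx.2 hcu⟩
  have hg_cont : ContinuousOn (deriv f) (Icc a c) :=
    (hf1.continuousOn).mono (fun x hx => (hsub (hIccIoo hx)).1)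
  have hg_mono : StrictMonoOn (deriv f) (Icc a c) := by
    apply strictMonoOn_of_deriv_pos (convex_Icc a c) hg_cont
    intro x hx
    rw [interior_Icc] at hx
    exact (hsub (hIccIoo ⟨le_of_lt hx.1, le_of_lt hx.2⟩)).2.1
  have hga : deriv f a = 0 := hmax.deriv_eq_zero
  have hgpos : ∀ x ∈ Ioo a c, 0 < deriv f x := by
    intro x hx
    have := hg_mono (left_mem_Icc.2 (le_of_lt hac)) ⟨le_of_lt hx.1, le_of_lt hx.2⟩ hx.1
    rwa [hga] at this
  have hf_cont : ContinuousOn f (Icc a c) :=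
    (hf.continuousOn).mono (fun x hx => (hsub (hIccIoo hx)).1)
  have hf_mono : StrictMonoOn f (Icc a c) := by
    apply strictMonoOn_of_deriv_pos (convex_Icc a c) hf_cont
    intro x hx
    rw [interior_Icc] at hx
    exact hgpos x hx
  have h1 : f a < f c := hf_mono (left_mem_Icc.2 (le_of_lt hac)) (right_mem_Icc.2 (le_of_lt hac)) hac
  have h2 : f c ≤ f a := (hsub (hIccIoo (right_mem_Icc.2 (le_of_lt hac)))).2.2
  linarith

lemma sliceX_contDiffOn {u : ℝ × ℝ → ℝ} {U : Set (ℝ × ℝ)} (hu : ContDiffOn ℝ 2 u U)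
    (y : ℝ) : ContDiffOn ℝ 2 (fun x => u (x, y)) {x | (x, y) ∈ U} :=
  hu.comp ((contDiff_id.prodMk contDiff_const).contDiffOn) (fun x hx => hx)

lemma sliceY_contDiffOn {u : ℝ × ℝ → ℝ} {U : Set (ℝ × ℝ)} (hu : ContDiffOn ℝ 2 u U)
    (x : ℝ) : ContDiffOn ℝ 2 (fun y => u (x, y)) {y | (x, y) ∈ U} :=
  hu.comp ((contDiff_const.prodMk contDiff_id).contDiffOn) (fun y hy => hy)

lemma lap2_nonpos_of_max {u : ℝ × ℝ → ℝ} {U : Set (ℝ × ℝ)} (hU : IsOpen U)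
    {p : ℝ × ℝ} (hp : p ∈ U) (hu : ContDiffOn ℝ 2 u U)
    (hmax : ∀ q ∈ U, u q ≤ u p) : lap2 u p ≤ 0 := by
  have hX : IsOpen {x | (x, p.2) ∈ U} := hU.preimage (by fun_prop)
  have hY : IsOpen {y | (p.1, y) ∈ U} := hU.preimage (by fun_prop)
  have hpX : p.1 ∈ {x | (x, p.2) ∈ U} := hp
  have hpY : p.2 ∈ {y | (p.1, y) ∈ U} := hp
  have hmX : IsLocalMax (fun x => u (x, p.2)) p.1 := by
    filter_upwards [hX.mem_nhds hpX] with x hx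
    exact hmax _ hx
  have hmY : IsLocalMax (fun y => u (p.1, y)) p.2 := by
    filter_upwards [hY.mem_nhds hpY] with y hy
    exact hmax _ hy
  have h1 := deriv2_nonpos_localmax hX hpX (sliceX_contDiffOn hu p.2) hmX
  have h2 := deriv2_nonpos_localmax hY hpY (sliceY_contDiffOn hu p.1) hmY
  simp only [lap2]
  linarith

lemma lap2_neg (u : ℝ × ℝ → ℝ) (p : ℝ × ℝ) : lap2 (fun q => -u q) p = -lap2 u p := by
  simp only [lap2, deriv.fun_neg']
  ring

lemma lap2_nonneg_of_min {u : ℝ × ℝ → ℝ} {U : Set (ℝ × ℝ)} (hU : IsOpen U)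
    {p : ℝ × ℝ} (hp : p ∈ U) (hu : ContDiffOn ℝ 2 u U)
    (hmin : ∀ q ∈ U, u p ≤ u q) : 0 ≤ lap2 u p := by
  have := lap2_nonpos_of_max hU hp hu.neg (u := fun q => -u q) (fun q hq => by
    simpa using hmin q hq)
  rw [lap2_neg] at this
  linarith

lemma hasDerivAt_of_contDiffOn {g : ℝ → ℝ} {s : Set ℝ} (hs : IsOpen s) {x : ℝ} (hx : x ∈ s)
    (hg : ContDiffOn ℝ 2 g s) : HasDerivAt g (deriv g x) x :=
  ((hg.differentiableOn (by norm_num)).differentiableAt (hs.mem_nhds hx)).hasDerivAt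

lemma hasDerivAt_deriv_of_contDiffOn {g : ℝ → ℝ} {s : Set ℝ} (hs : IsOpen s) {x : ℝ} (hx : x ∈ s)
    (hg : ContDiffOn ℝ 2 g s) : HasDerivAt (deriv g) (deriv (deriv g) x) x := by
  have h1 : ContDiffOn ℝ 1 (deriv g) s := hg.deriv_of_isOpen hs (m := 1) (by norm_num)
  exact ((h1.differentiableOn (by norm_num)).differentiableAt (hs.mem_nhds hx)).hasDerivAt

lemma deriv2_sq_comb {g1 g2 g3 : ℝ → ℝ} {s : Set ℝ} (hs : IsOpen s) {a : ℝ} (ha : a ∈ s)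
    (h1 : ContDiffOn ℝ 2 g1 s) (h2 : ContDiffOn ℝ 2 g2 s) (h3 : ContDiffOn ℝ 2 g3 s) :
    deriv (deriv (fun x => g1 x ^ 2 + g2 x ^ 2 + 3 * g3 x ^ 2)) a =
      (2 * (g1 a * deriv (deriv g1) a) + 2 * (g2 a * deriv (deriv g2) a)
        + 6 * (g3 a * deriv (deriv g3) a))
      + (2 * (deriv g1 a) ^ 2 + 2 * (deriv g2 a) ^ 2 + 6 * (deriv g3 a) ^ 2) := by
  have key : ∀ x ∈ s, deriv (fun x => g1 x ^ 2 + g2 x ^ 2 + 3 * g3 x ^ 2) x =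
      2 * g1 x * deriv g1 x + 2 * g2 x * deriv g2 x + 3 * (2 * g3 x * deriv g3 x) := by
    intro x hx
    have d1 := hasDerivAt_of_contDiffOn hs hx h1
    have d2 := hasDerivAt_of_contDiffOn hs hx h2
    have d3 := hasDerivAt_of_contDiffOn hs hx h3
    have : HasDerivAt (fun x => g1 x ^ 2 + g2 x ^ 2 + 3 * g3 x ^ 2)
        (2 * g1 x * deriv g1 x + 2 * g2 x * deriv g2 x + 3 * (2 * g3 x * deriv g3 x)) x := by
      have p1 : HasDerivAt (fun x => g1 x ^ 2) (2 * g1 x * deriv g1 x) x := by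
        simpa using d1.fun_pow 2
      have p2 : HasDerivAt (fun x => g2 x ^ 2) (2 * g2 x * deriv g2 x) x := by
        simpa using d2.fun_pow 2
      have p3 : HasDerivAt (fun x => 3 * g3 x ^ 2) (3 * (2 * g3 x * deriv g3 x)) x := by
        simpa using (d3.pow 2).const_mul 3
      exact (p1.add p2).add p3
    exact this.deriv
  have heq : deriv (fun x => g1 x ^ 2 + g2 x ^ 2 + 3 * g3 x ^ 2) =ᶠ[nhds a]
      (fun x => 2 * g1 x * deriv g1 x + 2 * g2 x * deriv g2 x + 3 * (2 * g3 x * deriv g3 x)) := by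
    filter_upwards [hs.mem_nhds ha] with x hx
    exact key x hx
  rw [heq.deriv_eq]
  have d1 := hasDerivAt_of_contDiffOn hs ha h1
  have d2 := hasDerivAt_of_contDiffOn hs ha h2
  have d3 := hasDerivAt_of_contDiffOn hs ha h3
  have dd1 := hasDerivAt_deriv_of_contDiffOn hs ha h1
  have dd2 := hasDerivAt_deriv_of_contDiffOn hs ha h2
  have dd3 := hasDerivAt_deriv_of_contDiffOn hs ha h3
  have t1 : HasDerivAt (fun x => 2 * g1 x * deriv g1 x)
      (2 * (deriv g1 a * deriv g1 a + g1 a * deriv (deriv g1) a)) a := by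
    simpa [mul_assoc, mul_comm, mul_left_comm] using ((d1.mul dd1).const_mul 2)
  have t2 : HasDerivAt (fun x => 2 * g2 x * deriv g2 x)
      (2 * (deriv g2 a * deriv g2 a + g2 a * deriv (deriv g2) a)) a := by
    simpa [mul_assoc, mul_comm, mul_left_comm] using ((d2.mul dd2).const_mul 2)
  have t3 : HasDerivAt (fun x => 3 * (2 * g3 x * deriv g3 x))
      (3 * (2 * (deriv g3 a * deriv g3 a + g3 a * deriv (deriv g3) a))) a := by
    simpa [mul_assoc, mul_comm, mul_left_comm] using (((d3.mul dd3).const_mul 2).const_mul 3)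
  have := ((t1.fun_add t2).fun_add t3).deriv
  rw [this]; ring

lemma lap2_sq_comb {q1 q2 q3 : ℝ × ℝ → ℝ} {U : Set (ℝ × ℝ)} (hU : IsOpen U)
    {p : ℝ × ℝ} (hp : p ∈ U) (h1 : ContDiffOn ℝ 2 q1 U) (h2 : ContDiffOn ℝ 2 q2 U)
    (h3 : ContDiffOn ℝ 2 q3 U) :
    lap2 (fun q => q1 q ^ 2 + q2 q ^ 2 + 3 * q3 q ^ 2) p =
      (2 * (q1 p * lap2 q1 p) + 2 * (q2 p * lap2 q2 p) + 6 * (q3 p * lap2 q3 p))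
      + (2 * gradSq2 q1 p + 2 * gradSq2 q2 p + 6 * gradSq2 q3 p) := by
  have hX : IsOpen {x | (x, p.2) ∈ U} := hU.preimage (by fun_prop)
  have hY : IsOpen {y | (p.1, y) ∈ U} := hU.preimage (by fun_prop)
  have hpX : p.1 ∈ {x | (x, p.2) ∈ U} := hp
  have hpY : p.2 ∈ {y | (p.1, y) ∈ U} := hp
  have hx := deriv2_sq_comb hX hpX (sliceX_contDiffOn h1 p.2) (sliceX_contDiffOn h2 p.2)
    (sliceX_contDiffOn h3 p.2)
  have hy := deriv2_sq_comb hY hpY (sliceY_contDiffOn h1 p.1) (sliceY_contDiffOn h2 p.1)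
    (sliceY_contDiffOn h3 p.1)
  simp only [lap2, gradSq2]
  rw [show (fun x => (fun q => q1 q ^ 2 + q2 q ^ 2 + 3 * q3 q ^ 2) (x, p.2))
      = (fun x => (fun x' => q1 (x', p.2)) x ^ 2 + (fun x' => q2 (x', p.2)) x ^ 2
        + 3 * (fun x' => q3 (x', p.2)) x ^ 2) from rfl]
  rw [show (fun y => (fun q => q1 q ^ 2 + q2 q ^ 2 + 3 * q3 q ^ 2) (p.1, y))
      = (fun y => (fun y' => q1 (p.1, y')) y ^ 2 + (fun y' => q2 (p.1, y')) y ^ 2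
        + 3 * (fun y' => q3 (p.1, y')) y ^ 2) from rfl]
  rw [hx, hy]
  simp only [Prod.mk.eta]
  ring

lemma gradSq2_nonneg (q : ℝ × ℝ → ℝ) (p : ℝ × ℝ) : 0 ≤ gradSq2 q p := by
  simp only [gradSq2]
  positivity

lemma isOpen_TSq (η : ℝ) : IsOpen (TSq η) := by
  have h1 : IsOpen {p : ℝ × ℝ | |p.1| < 1 - η} :=
    isOpen_lt (continuous_fst.abs) continuous_const
  have h2 : IsOpen {p : ℝ × ℝ | |p.2| < 1 - η} :=
    isOpen_lt (continuous_snd.abs) continuous_const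
  have h3 : IsOpen {p : ℝ × ℝ | |p.1 + p.2| < 1} :=
    isOpen_lt ((continuous_fst.add continuous_snd).abs) continuous_const
  have h4 : IsOpen {p : ℝ × ℝ | |p.1 - p.2| < 1} :=
    isOpen_lt ((continuous_fst.sub continuous_snd).abs) continuous_const
  exact h1.and (h2.and (h3.and h4))

lemma closure_TSq_subset (η : ℝ) : closure (TSq η) ⊆
    {p : ℝ × ℝ | |p.1| ≤ 1 - η ∧ |p.2| ≤ 1 - η ∧ |p.1 + p.2| ≤ 1 ∧ |p.1 - p.2| ≤ 1} := by
  apply closure_minimal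
  · rintro p ⟨a, b, c, d⟩
    exact ⟨le_of_lt a, le_of_lt b, le_of_lt c, le_of_lt d⟩
  · have h1 : IsClosed {p : ℝ × ℝ | |p.1| ≤ 1 - η} :=
      isClosed_le (continuous_fst.abs) continuous_const
    have h2 : IsClosed {p : ℝ × ℝ | |p.2| ≤ 1 - η} :=
      isClosed_le (continuous_snd.abs) continuous_const
    have h3 : IsClosed {p : ℝ × ℝ | |p.1 + p.2| ≤ 1} :=
      isClosed_le ((continuous_fst.add continuous_snd).abs) continuous_const
    have h4 : IsClosed {p : ℝ × ℝ | |p.1 - p.2| ≤ 1} :=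
      isClosed_le ((continuous_fst.sub continuous_snd).abs) continuous_const
    exact h1.inter (h2.inter (h3.inter h4))

lemma isCompact_closure_TSq (η : ℝ) (hη : η ∈ Ioo (0:ℝ) 1) : IsCompact (closure (TSq η)) := by
  apply IsCompact.of_isClosed_subset
    (isCompact_Icc (a := ((-2:ℝ), (-2:ℝ))) (b := ((2:ℝ), (2:ℝ)))) isClosed_closure
  intro p hp
  obtain ⟨h1, h2, h3, h4⟩ := closure_TSq_subset η hp
  rw [abs_le] at h1 h2 h3 h4
  rw [Set.mem_Icc, Prod.le_def, Prod.le_def]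
  have hη0 := hη.1
  refine ⟨⟨?_, ?_⟩, ?_, ?_⟩ <;> · show _ ≤ _; simp only []; linarith [h1.1, h1.2, h2.1, h2.2]

lemma frontier_TSq_subset (η : ℝ) (hη : η ∈ Ioo (0:ℝ) 1) :
    frontier (TSq η) ⊆ edgeC1 η ∪ edgeC2 η ∪ edgeC3 η ∪ edgeC4 η ∪
      edgeS1 η ∪ edgeS2 η ∪ edgeS3 η ∪ edgeS4 η := by
  intro p hp
  rw [(isOpen_TSq η).frontier_eq] at hp
  obtain ⟨hcl, hnot⟩ := hp
  obtain ⟨h1, h2, h3, h4⟩ := closure_TSq_subset η hcl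
  rw [abs_le] at h1 h2 h3 h4
  have hη0 := hη.1; have hη1 := hη.2
  simp only [TSq, mem_setOf_eq, not_and_or, not_lt] at hnot
  simp only [mem_union]
  rcases hnot with h | h | h | h
  · rw [le_abs] at h
    rcases h with h | h
    · -- S1
      refine Or.inl (Or.inl (Or.inl (Or.inr ?_)))
      exact ⟨le_antisymm h1.2 h, abs_le.2 ⟨by linarith [h4.2], by linarith [h3.2]⟩⟩
    · -- S3
      refine Or.inl (Or.inr ?_)
      exact ⟨by linarith [h1.1], abs_le.2 ⟨by linarith [h3.1], by linarith [h4.1]⟩⟩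
  · rw [le_abs] at h
    rcases h with h | h
    · -- S2
      refine Or.inl (Or.inl (Or.inr ?_))
      exact ⟨le_antisymm h2.2 h, abs_le.2 ⟨by linarith [h4.1], by linarith [h3.2]⟩⟩
    · -- S4
      refine Or.inr ?_
      exact ⟨by linarith [h2.1], abs_le.2 ⟨by linarith [h3.1], by linarith [h4.2]⟩⟩
  · rw [le_abs] at h
    rcases h with h | h
    · -- C1
      refine Or.inl (Or.inl (Or.inl (Or.inl (Or.inl (Or.inl (Or.inl ?_))))))
      exact ⟨le_antisymm h3.2 h, by linarith [h2.2], h1.2⟩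
    · -- C3
      refine Or.inl (Or.inl (Or.inl (Or.inl (Or.inl (Or.inr ?_)))))
      exact ⟨by linarith [h3.1], h1.1, by linarith [h2.2]⟩
  · rw [le_abs] at h
    rcases h with h | h
    · -- C4
      refine Or.inl (Or.inl (Or.inl (Or.inl (Or.inr ?_))))
      exact ⟨le_antisymm h4.2 h, by linarith [h2.1], h1.2⟩
    · -- C2
      refine Or.inl (Or.inl (Or.inl (Or.inl (Or.inl (Or.inl (Or.inr ?_))))))
      exact ⟨by linarith [h4.1], h1.1, by linarith [h2.1]⟩

end Aux

set_option maxHeartbeats 2000000 in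
/-- Proposition prop:bounds-highA: for `−B²/(3C) ≤ A < 0` and a
solution of (EL123)–(BC123) with `q₃ < 0` in `Ω`, one has `−s₊/6 ≤ q₃ ≤ s₋/3` in `Ω`. -/
theorem statement_5 (A B C L lam η : ℝ) (hB : 0 < B) (hC : 0 < C)
    (hA1 : -(B ^ 2) / (3 * C) ≤ A) (hA2 : A < 0)
    (hL : 0 < L) (hlam : 0 < lam) (hη : η ∈ Ioo (0 : ℝ) 1)
    (q1 q2 q3 : ℝ × ℝ → ℝ) (hsol : IsSolEL123 A B C L lam η q1 q2 q3)
    (hq3 : ∀ p ∈ TSq η, q3 p < 0) :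
    ∀ p ∈ TSq η, -(splus A B C) / 6 ≤ q3 p ∧ q3 p ≤ sminus A B C / 3 := by
  obtain ⟨hc2q1, hc2q2, hc2q3, hcq1, hcq2, hcq3, hPDE1, hPDE2, hPDE3, hbc1, hbc2, hbc3⟩ := hsol
  obtain ⟨hbC13, hbC24, hbS13, hbS24⟩ := hbc1
  -- basic facts about s₊, s₋
  have habs : |A| = -A := abs_of_neg hA2
  have hnAC : 0 < (-A) * C := mul_pos (by linarith) hC
  have hDext : 0 ≤ B ^ 2 + 24 * |A| * C := by rw [habs]; nlinarith [sq_nonneg B]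
  set D := Real.sqrt (B ^ 2 + 24 * |A| * C) with hDdef
  have hD0 : 0 ≤ D := Real.sqrt_nonneg _
  have hDsq : D ^ 2 = B ^ 2 - 24 * A * C := by
    rw [hDdef, Real.sq_sqrt hDext, habs]; ring
  have hDB : B < D := by nlinarith [hDsq, hD0, hnAC, add_nonneg hB.le hD0]
  have hA13 : -(B ^ 2) ≤ A * (3 * C) := (div_le_iff₀ (by positivity)).1 hA1
  have hD3B : D ≤ 3 * B := by
    nlinarith [hDsq, hA13, add_nonneg hD0 (by linarith : (0:ℝ) ≤ 3 * B)]
  have hCne : (4 * C : ℝ) ≠ 0 := by positivity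
  have hs4 : 4 * C * splus A B C = B + D := by
    rw [splus, ← hDdef]; field_simp
  have hsm4 : 4 * C * sminus A B C = B - D := by
    rw [sminus, ← hDdef]; field_simp
  have hspos : 0 < splus A B C := by
    rw [splus, ← hDdef]; apply div_pos (by linarith) (by positivity)
  have hsum : 2 * C * (splus A B C + sminus A B C) = B := by linarith
  have hps : 2 * C * splus A B C * sminus A B C = 3 * A := by
    apply mul_left_cancel₀ (show (8 * C : ℝ) ≠ 0 by positivity)
    linear_combination (4 * C * sminus A B C) * hs4 + (B + D) * hsm4 - hDsq
  have hAs : 3 * A = B * splus A B C - 2 * C * (splus A B C) ^ 2 := by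
    linear_combination splus A B C * hsum - hps
  have hsmB : C * splus A B C ≤ B := by linarith
  have hDle : 0 ≤ 2 * C * sminus A B C + B := by linarith
  have h4Cs : B < 4 * C * splus A B C := by linarith
  have hms : -(splus A B C) / 6 ≤ sminus A B C / 3 := by
    nlinarith [hs4, hsm4, hD3B, hC]
  -- boundary bounds
  have hbq1 : ∀ p ∈ frontier (TSq η), (q1 p) ^ 2 ≤ (splus A B C) ^ 2 / 4 := by
    intro p hp
    have hS : ∀ y : ℝ, |y| ≤ η → (g0 A B C η y) ^ 2 ≤ (splus A B C) ^ 2 / 4 := by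
      intro y hy
      have hy2 : y ^ 2 ≤ η ^ 2 := sq_le_sq' (by cases abs_le.1 hy; linarith) (abs_le.1 hy).2
      have h1 : (g0 A B C η y) ^ 2 = (splus A B C) ^ 2 * y ^ 2 / (4 * η ^ 2) := by
        rw [g0]; ring
      rw [h1, div_le_div_iff₀ (by nlinarith [mul_pos hη.1 hη.1]) (by norm_num : (0:ℝ) < 4)]
      nlinarith [mul_le_mul_of_nonneg_left hy2 (sq_nonneg (splus A B C))]
    rcases frontier_TSq_subset η hη hp with (((((((h | h) | h) | h) | h) | h) | h) | h)
    · rw [hbC13 p (Or.inl h)]; nlinarith [sq_nonneg (splus A B C)]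
    · rw [hbC24 p (Or.inl h)]; nlinarith [sq_nonneg (splus A B C)]
    · rw [hbC13 p (Or.inr h)]; nlinarith [sq_nonneg (splus A B C)]
    · rw [hbC24 p (Or.inr h)]; nlinarith [sq_nonneg (splus A B C)]
    · rw [hbS13 p (Or.inl h)]; exact hS p.2 h.2
    · rw [hbS24 p (Or.inl h)]; exact hS p.1 h.2
    · rw [hbS13 p (Or.inr h)]; exact hS p.2 h.2
    · rw [hbS24 p (Or.inr h)]; exact hS p.1 h.2
  have hbdσ : ∀ p ∈ frontier (TSq η),
      (q1 p) ^ 2 + (q2 p) ^ 2 + 3 * (q3 p) ^ 2 ≤ (splus A B C) ^ 2 / 3 := by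
    intro p hp
    rw [hbc2 p hp, hbc3 p hp]
    nlinarith [hbq1 p hp]
  -- setup
  have h00 : ((0:ℝ), (0:ℝ)) ∈ TSq η := by
    refine ⟨?_, ?_, ?_, ?_⟩ <;> simp <;> linarith [hη.1, hη.2]
  have hclne : (closure (TSq η)).Nonempty := ⟨_, subset_closure h00⟩
  have hcomp := isCompact_closure_TSq η hη
  have hmemsplit : ∀ p ∈ closure (TSq η), p ∈ TSq η ∨ p ∈ frontier (TSq η) := by
    intro p hp
    rcases em (p ∈ TSq η) with h | h
    · exact Or.inl h
    · exact Or.inr (by rw [(isOpen_TSq η).frontier_eq]; exact ⟨hp, h⟩)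
  -- the σ = q1² + q2² + 3 q3² bound on the closure
  have hσc2 : ContDiffOn ℝ 2 (fun q => q1 q ^ 2 + q2 q ^ 2 + 3 * q3 q ^ 2) (TSq η) :=
    ((hc2q1.pow 2).add (hc2q2.pow 2)).add (contDiffOn_const.mul (hc2q3.pow 2))
  have hσcont : ContinuousOn (fun q => q1 q ^ 2 + q2 q ^ 2 + 3 * q3 q ^ 2) (closure (TSq η)) :=
    ((hcq1.pow 2).add (hcq2.pow 2)).add (continuousOn_const.mul (hcq3.pow 2))
  have hσle : ∀ p ∈ closure (TSq η),
      (q1 p) ^ 2 + (q2 p) ^ 2 + 3 * (q3 p) ^ 2 ≤ (splus A B C) ^ 2 / 3 := by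
    obtain ⟨p0, hp0mem, hp0max⟩ := hcomp.exists_isMaxOn hclne hσcont
    have hmax := isMaxOn_iff.1 hp0max
    have hp0bd : (q1 p0) ^ 2 + (q2 p0) ^ 2 + 3 * (q3 p0) ^ 2 ≤ (splus A B C) ^ 2 / 3 := by
      rcases hmemsplit p0 hp0mem with hin | hfr
      · -- interior maximum: use the PDE
        have hlap : lap2 (fun q => q1 q ^ 2 + q2 q ^ 2 + 3 * q3 q ^ 2) p0 ≤ 0 :=
          lap2_nonpos_of_max (isOpen_TSq η) hin hσc2
            (fun q hq => hmax q (subset_closure hq))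
        have hEq : lap2 (fun q => q1 q ^ 2 + q2 q ^ 2 + 3 * q3 q ^ 2) p0 =
            2 * (lam ^ 2 / L) *
              (((q1 p0) ^ 2 + (q2 p0) ^ 2 + 3 * (q3 p0) ^ 2) *
                  (A + 2 * C * ((q1 p0) ^ 2 + (q2 p0) ^ 2 + 3 * (q3 p0) ^ 2))
                + 3 * B * q3 p0 * (((q1 p0) ^ 2 + (q2 p0) ^ 2) - (q3 p0) ^ 2))
            + (2 * gradSq2 q1 p0 + 2 * gradSq2 q2 p0 + 6 * gradSq2 q3 p0) := by
          rw [lap2_sq_comb (isOpen_TSq η) hin hc2q1 hc2q2 hc2q3,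
            hPDE1 p0 hin, hPDE2 p0 hin, hPDE3 p0 hin]
          field_simp
          ring
        have hcoefpos : 0 < 2 * (lam ^ 2 / L) := by positivity
        have hKle : ((q1 p0) ^ 2 + (q2 p0) ^ 2 + 3 * (q3 p0) ^ 2) *
            (A + 2 * C * ((q1 p0) ^ 2 + (q2 p0) ^ 2 + 3 * (q3 p0) ^ 2))
            + 3 * B * q3 p0 * (((q1 p0) ^ 2 + (q2 p0) ^ 2) - (q3 p0) ^ 2) ≤ 0 := by
          by_contra hKpos
          push_neg at hKpos
          have := mul_pos hcoefpos hKpos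
          have hG := gradSq2_nonneg q1 p0
          have hG2 := gradSq2_nonneg q2 p0
          have hG3 := gradSq2_nonneg q3 p0
          linarith [hEq, hlap]
        have halg := alg_sigma hB hC hspos h4Cs hAs (le_of_lt (hq3 p0 hin))
          (by positivity : (0:ℝ) ≤ (q1 p0) ^ 2 + (q2 p0) ^ 2)
          (by linarith [hKle] :
            (((q1 p0) ^ 2 + (q2 p0) ^ 2) + 3 * (q3 p0) ^ 2) *
              (A + 2 * C * (((q1 p0) ^ 2 + (q2 p0) ^ 2) + 3 * (q3 p0) ^ 2))
            + 3 * B * q3 p0 * (((q1 p0) ^ 2 + (q2 p0) ^ 2) - (q3 p0) ^ 2) ≤ 0)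
        linarith [halg]
      · exact hbdσ p0 hfr
    intro p hp
    exact le_trans (hmax p hp) hp0bd
  -- lower bound for q3
  obtain ⟨pm, hpmmem, hpmmin⟩ := hcomp.exists_isMinOn hclne hcq3
  have hminpm := isMinOn_iff.1 hpmmin
  have hlow : -(splus A B C) / 6 ≤ q3 pm := by
    rcases hmemsplit pm hpmmem with hin | hfr
    · have hlap : 0 ≤ lap2 q3 pm :=
        lap2_nonneg_of_min (isOpen_TSq η) hin hc2q3 (fun q hq => hminpm q (subset_closure hq))
      have hKpos : 0 ≤ q3 pm * (A - B * q3 pm + 6 * C * (q3 pm) ^ 2)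
          + ((q1 pm) ^ 2 + (q2 pm) ^ 2) * (2 * C * q3 pm + B / 3) := by
        by_contra hneg
        push_neg at hneg
        have hEq : lap2 q3 pm = (lam ^ 2 / L) *
            (q3 pm * (A - B * q3 pm + 6 * C * (q3 pm) ^ 2)
              + ((q1 pm) ^ 2 + (q2 pm) ^ 2) * (2 * C * q3 pm + B / 3)) := by
          rw [hPDE3 pm hin]
          field_simp
          ring
        have hcpos : 0 < lam ^ 2 / L := by positivity
        have := mul_neg_of_pos_of_neg hcpos hneg
        linarith [hEq, hlap]
      have := alg_lower hB hC hspos hsum hps hAs hsmB (hq3 pm hin)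
        (by positivity : (0:ℝ) ≤ (q1 pm) ^ 2 + (q2 pm) ^ 2)
        (by linarith [hσle pm hpmmem]) hKpos
      linarith
    · rw [hbc3 pm hfr]
  -- upper bound for q3
  obtain ⟨pM, hpMmem, hpMmax⟩ := hcomp.exists_isMaxOn hclne hcq3
  have hmaxpM := isMaxOn_iff.1 hpMmax
  have hup : q3 pM ≤ sminus A B C / 3 := by
    rcases hmemsplit pM hpMmem with hin | hfr
    · have hlap : lap2 q3 pM ≤ 0 :=
        lap2_nonpos_of_max (isOpen_TSq η) hin hc2q3 (fun q hq => hmaxpM q (subset_closure hq))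
      have hKle : q3 pM * (A - B * q3 pM + 6 * C * (q3 pM) ^ 2)
          + ((q1 pM) ^ 2 + (q2 pM) ^ 2) * (2 * C * q3 pM + B / 3) ≤ 0 := by
        by_contra hpos
        push_neg at hpos
        have hEq : lap2 q3 pM = (lam ^ 2 / L) *
            (q3 pM * (A - B * q3 pM + 6 * C * (q3 pM) ^ 2)
              + ((q1 pM) ^ 2 + (q2 pM) ^ 2) * (2 * C * q3 pM + B / 3)) := by
          rw [hPDE3 pM hin]
          field_simp
          ring
        have hcpos : 0 < lam ^ 2 / L := by positivity
        have := mul_pos hcpos hpos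
        linarith [hEq, hlap]
      exact alg_upper hB hC hspos hsum hps hDle (hq3 pM hin)
        (by positivity : (0:ℝ) ≤ (q1 pM) ^ 2 + (q2 pM) ^ 2) hKle
    · rw [hbc3 pM hfr]; exact hms
  intro p hp
  exact ⟨le_trans hlow (hminpm p (subset_closure hp)),
    le_trans (hmaxpM p (subset_closure hp)) hup⟩
end
end

section
/- (Algebraic nonpositivity with equality case; step in the proof of Proposition prop:unstable.) Let A < 0, B > 0, C > 0 and s₊ := (B + √(B² + 24|A|C))/(4C). If real numbers q₁ and q₃ satisfy q₁² + 3q₃² ≤ s₊²/3 and q₃ ≤ −s₊/6, then A + 2Bq₃ + 2C(q₁² + 3q₃²) ≤ 0, with equality if and only if |q₁| = s₊/2 and q₃ = −s₊/6. -/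
noncomputable section

/-- algebraic step in Proposition prop:unstable: if
`q₁² + 3q₃² ≤ s₊²/3` and `q₃ ≤ −s₊/6` then `A + 2Bq₃ + 2C(q₁² + 3q₃²) ≤ 0`,
with equality iff `|q₁| = s₊/2` and `q₃ = −s₊/6`. -/
theorem statement_11 (A B C q1 q3 : ℝ) (hA : A < 0) (hB : 0 < B) (hC : 0 < C)
    (h1 : q1 ^ 2 + 3 * q3 ^ 2 ≤ (splus A B C) ^ 2 / 3)
    (h2 : q3 ≤ -(splus A B C) / 6) :
    A + 2 * B * q3 + 2 * C * (q1 ^ 2 + 3 * q3 ^ 2) ≤ 0 ∧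
    (A + 2 * B * q3 + 2 * C * (q1 ^ 2 + 3 * q3 ^ 2) = 0 ↔
      |q1| = splus A B C / 2 ∧ q3 = -(splus A B C) / 6) := by
  set s := splus A B C with hsdef
  have habs : |A| = -A := abs_of_neg hA
  have hD : (0:ℝ) ≤ B ^ 2 + 24 * |A| * C := by
    have : (0:ℝ) ≤ |A| := abs_nonneg A
    positivity
  have hsq : Real.sqrt (B ^ 2 + 24 * |A| * C) ^ 2 = B ^ 2 + 24 * |A| * C :=
    Real.sq_sqrt hD
  have hs_eq : 4 * C * s = B + Real.sqrt (B ^ 2 + 24 * |A| * C) := by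
    rw [hsdef, splus]
    field_simp
  have hs_pos : 0 < s := by
    rw [hsdef, splus]
    have hsqnn : 0 ≤ Real.sqrt (B ^ 2 + 24 * |A| * C) := Real.sqrt_nonneg _
    positivity
  have hkey : 2 * C * s ^ 2 - B * s = -3 * A := by
    have h16 : (4 * C * s) ^ 2 = (B + Real.sqrt (B ^ 2 + 24 * |A| * C)) ^ 2 := by
      rw [hs_eq]
    have hrt : Real.sqrt (B ^ 2 + 24 * |A| * C) = 4 * C * s - B := by
      linarith [hs_eq]
    nlinarith [h16, hsq, habs, hC]
  have hCr : 2 * C * (q1 ^ 2 + 3 * q3 ^ 2) ≤ 2 * C * (s ^ 2 / 3) := by nlinarith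
  have hBq : 2 * B * q3 ≤ 2 * B * (-s / 6) := by nlinarith
  have hle : A + 2 * B * q3 + 2 * C * (q1 ^ 2 + 3 * q3 ^ 2) ≤ 0 := by
    nlinarith [hkey, hCr, hBq]
  refine ⟨hle, ?_, ?_⟩
  · intro heq
    have h2C : (0:ℝ) < 2 * C := by linarith
    have h2B : (0:ℝ) < 2 * B := by linarith
    have heq1' : 2 * C * (q1 ^ 2 + 3 * q3 ^ 2) = 2 * C * (s ^ 2 / 3) := by
      linarith [heq, hkey, hBq, hCr]
    have heq2' : 2 * B * q3 = 2 * B * (-s / 6) := by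
      linarith [heq, hkey, hBq, hCr]
    have heq1 : q1 ^ 2 + 3 * q3 ^ 2 = s ^ 2 / 3 :=
      mul_left_cancel₀ (ne_of_gt h2C) heq1'
    have heq2 : q3 = -s / 6 := mul_left_cancel₀ (ne_of_gt h2B) heq2'
    have hq1 : q1 ^ 2 = (s / 2) ^ 2 := by
      rw [heq2] at heq1; linarith [heq1]
    have : |q1| = |s / 2| := by
      rw [← Real.sqrt_sq_eq_abs, ← Real.sqrt_sq_eq_abs, hq1]
    rw [this, abs_of_pos (by positivity : (0:ℝ) < s / 2)]
    exact ⟨rfl, heq2⟩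
  · rintro ⟨hq1, hq3⟩
    have hq1sq : q1 ^ 2 = (s / 2) ^ 2 := by
      rw [← sq_abs q1, hq1]
    rw [hq3, hq1sq]
    nlinarith [hkey]
end
end
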